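/- arXiv:0712.0106 — 9 statements merged into one kernel-verified Lean document; each statement's English description precedes it below -/
import Mathlib

section
/- Let λ₁ ≥ λ₂ ≥ λ₃ be real numbers with arctan λ₁ + arctan λ₂ + arctan λ₃ ≥ π/2. Then λ₁ ≥ λ₂ > 0 and λᵢ + λⱼ ≥ 0 for every pair of distinct indices i, j. -/
open Real

theorem stmt_1 (l₁ l₂ l₃ : ℝ)
    (hord₁ : l₁ ≥ l₂) (hord₂ : l₂ ≥ l₃)
    (hsum : arctan l₁ + arctan l₂ + arctan l₃ ≥ π/2) :
    l₁ ≥ l₂ ∧ l₂ > 0 ∧ l₁ + l₂ ≥ 0 ∧ l₁ + l₃ ≥ 0 ∧ l₂ + l₃ ≥ 0 := by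
  have h1 : arctan l₁ < π/2 := arctan_lt_pi_div_two l₁
  have h23 : arctan l₂ + arctan l₃ > 0 := by linarith
  have hl2 : l₂ > 0 := by
    by_contra h
    push_neg at h
    have a2 : arctan l₂ ≤ 0 := by simpa using Real.arctan_strictMono.monotone h
    have a3 : arctan l₃ ≤ 0 := by
      have : l₃ ≤ 0 := le_trans hord₂ h
      simpa using Real.arctan_strictMono.monotone this
    linarith
  have h23' : l₂ + l₃ ≥ 0 := by
    by_contra h
    push_neg at h
    have : l₃ < -l₂ := by linarith
    have := Real.arctan_strictMono this
    rw [Real.arctan_neg] at this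
    linarith
  refine ⟨hord₁, hl2, by linarith, by linarith, h23'⟩
end

section
/- Let λ₁ ≥ λ₂ ≥ λ₃ be real numbers with arctan λ₁ + arctan λ₂ + arctan λ₃ ≥ π/2 and λ₃ < 0. Then λ₁ + 2λ₃ > 0. -/
open Real

lemma aux_ne_odd (y : ℝ) (h1 : -(π/2) < y) (h2 : y < π/2) :
    ∀ k : ℤ, y ≠ (2 * k + 1) * π / 2 := by
  intro k hk
  rcases le_or_gt 0 k with h | h
  · have hk' : (0:ℝ) ≤ (k:ℝ) := by exact_mod_cast h
    nlinarith [pi_pos]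
  · have hk0 : k ≤ -1 := by omega
    have hk' : (k:ℝ) ≤ -1 := by exact_mod_cast hk0
    nlinarith [pi_pos]

theorem stmt_2 (l₁ l₂ l₃ : ℝ)
    (hord₁ : l₁ ≥ l₂) (hord₂ : l₂ ≥ l₃)
    (hsum : arctan l₁ + arctan l₂ + arctan l₃ ≥ π/2)
    (hneg : l₃ < 0) :
    l₁ + 2 * l₃ > 0 := by
  have hpi := pi_pos
  set γ := arctan l₃ with hγdef
  have hγ0 : γ < 0 := by
    have := Real.arctan_strictMono hneg
    rwa [arctan_zero] at this
  have hγ2 : -(π/2) < γ := neg_pi_div_two_lt_arctan l₃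
  set x := -γ/2 with hxdef
  have hx0 : 0 < x := by simp only [hxdef]; linarith
  have hx4 : x < π/4 := by simp only [hxdef]; linarith
  have h12 : arctan l₂ ≤ arctan l₁ := Real.arctan_strictMono.monotone hord₁
  have ha1 : π/4 + x ≤ arctan l₁ := by
    have : 2 * arctan l₁ ≥ π/2 + 2*x := by simp only [hxdef]; linarith
    linarith
  have hmem1 : π/4 + x ∈ Set.Ioo (-(π/2)) (π/2) := by
    constructor <;> linarith
  have hmem2 : arctan l₁ ∈ Set.Ioo (-(π/2)) (π/2) :=
    ⟨neg_pi_div_two_lt_arctan l₁, arctan_lt_pi_div_two l₁⟩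
  have hl1 : tan (π/4 + x) ≤ l₁ := by
    have := (Real.strictMonoOn_tan.le_iff_le hmem1 hmem2).mpr ha1
    rwa [tan_arctan] at this
  set t := tan x with htdef
  have ht0 : 0 < t := tan_pos_of_pos_of_lt_pi_div_two hx0 (by linarith)
  have ht1 : t < 1 := by
    have := Real.strictMonoOn_tan (a := x) (b := π/4)
      ⟨by linarith, by linarith⟩ ⟨by linarith, by linarith⟩ hx4
    rwa [tan_pi_div_four] at this
  have htan : tan (π/4 + x) = (1 + t)/(1 - t) := by
    rw [Real.tan_add' ⟨aux_ne_odd _ (by linarith) (by linarith),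
      aux_ne_odd _ (by linarith) (by linarith)⟩, tan_pi_div_four, one_mul]
  have hl3 : l₃ = -(2*t/(1-t^2)) := by
    have h2x : tan (2*x) = -l₃ := by
      have : 2*x = -γ := by simp only [hxdef]; ring
      rw [this, tan_neg, hγdef, tan_arctan]
    rw [Real.tan_two_mul] at h2x
    rw [← htdef] at h2x
    linarith
  have ht1' : (1:ℝ) - t ≠ 0 := by linarith
  have ht1'' : (1:ℝ) + t ≠ 0 := by linarith
  have ht2 : (1:ℝ) - t^2 ≠ 0 := by nlinarith
  have key : (1 + t)/(1 - t) - 2*(2*t/(1-t^2)) = (1-t)/(1+t) := by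
    field_simp
    ring
  have hpos : 0 < (1-t)/(1+t) := div_pos (by linarith) (by linarith)
  rw [htan] at hl1
  rw [hl3]
  linarith
end

section
/- Let λ₁, λ₂, λ₃ be real numbers with π/2 ≤ arctan λ₁ + arctan λ₂ + arctan λ₃ < 3π/2. Then σ₂ := λ₁λ₂ + λ₂λ₃ + λ₃λ₁ ≥ 1. -/
open Real

theorem stmt_3 (l₁ l₂ l₃ : ℝ)
    (hlow : π/2 ≤ arctan l₁ + arctan l₂ + arctan l₃)
    (hup : arctan l₁ + arctan l₂ + arctan l₃ < 3 * π / 2) :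
    l₁ * l₂ + l₂ * l₃ + l₃ * l₁ ≥ 1 := by
  have h1 : (0:ℝ) < Real.sqrt (1 + l₁^2) := Real.sqrt_pos.2 (by positivity)
  have h2 : (0:ℝ) < Real.sqrt (1 + l₂^2) := Real.sqrt_pos.2 (by positivity)
  have h3 : (0:ℝ) < Real.sqrt (1 + l₃^2) := Real.sqrt_pos.2 (by positivity)
  have s1 : Real.sqrt (1 + l₁^2) ^ 2 = 1 + l₁^2 := Real.sq_sqrt (by positivity)
  have s2 : Real.sqrt (1 + l₂^2) ^ 2 = 1 + l₂^2 := Real.sq_sqrt (by positivity)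
  have s3 : Real.sqrt (1 + l₃^2) ^ 2 = 1 + l₃^2 := Real.sq_sqrt (by positivity)
  have key : 1 - (l₁ * l₂ + l₂ * l₃ + l₃ * l₁) =
      (Real.sqrt (1 + l₁^2) * Real.sqrt (1 + l₂^2) * Real.sqrt (1 + l₃^2)) *
        Real.cos (arctan l₁ + arctan l₂ + arctan l₃) := by
    rw [Real.cos_add, Real.cos_add, Real.sin_add, Real.cos_arctan, Real.cos_arctan,
      Real.cos_arctan, Real.sin_arctan, Real.sin_arctan, Real.sin_arctan]
    field_simp
    nlinarith [s1, s2, s3, h1, h2, h3, mul_pos h1 h2, mul_pos (mul_pos h1 h2) h3]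
  have hcos : Real.cos (arctan l₁ + arctan l₂ + arctan l₃) ≤ 0 := by
    apply Real.cos_nonpos_of_pi_div_two_le_of_le hlow
    linarith
  nlinarith [mul_nonpos_of_nonneg_of_nonpos
    (le_of_lt (mul_pos (mul_pos h1 h2) h3)) hcos]
end

section
/- Let λ₁, λ₂, λ₃ be real numbers with λ₁λ₂ + λ₂λ₃ + λ₃λ₁ = 1 and arctan λ₁ + arctan λ₂ + arctan λ₃ = π/2, and set V = ∏ᵢ √(1 + λᵢ²) and σ₁ = λ₁ + λ₂ + λ₃. Then for each i, V/(1 + λᵢ²) = σ₁ − λᵢ. -/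
open Real

lemma sum_pos_of_arctan (b c : ℝ) (h : 0 < arctan b + arctan c) : 0 < b + c := by
  by_contra hbc
  push_neg at hbc
  have hb : b ≤ -c := by linarith
  have := Real.arctan_strictMono.monotone hb
  rw [Real.arctan_neg] at this
  linarith

lemma key (a b c : ℝ) (h : 1 - b*c = a*(b+c)) (hpos : 0 < b + c) :
    Real.sqrt (1+a^2) * Real.sqrt (1+b^2) * Real.sqrt (1+c^2) / (1+a^2) = b + c := by
  have ha : (0:ℝ) < 1 + a^2 := by positivity
  have h1 : (1+b^2)*(1+c^2) = (1+a^2)*(b+c)^2 := by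
    linear_combination (1 - b*c + a*(b+c)) * h
  have h2 : Real.sqrt (1+b^2) * Real.sqrt (1+c^2) = Real.sqrt (1+a^2) * (b+c) := by
    rw [← Real.sqrt_mul (by positivity), h1, Real.sqrt_mul (by positivity),
      Real.sqrt_sq hpos.le]
  rw [mul_assoc, h2, ← mul_assoc, ← Real.sqrt_mul (by positivity),
    Real.sqrt_mul_self ha.le]
  field_simp

theorem stmt_6 (l₁ l₂ l₃ : ℝ)
    (hσ₂ : l₁ * l₂ + l₂ * l₃ + l₃ * l₁ = 1)
    (hΘ : arctan l₁ + arctan l₂ + arctan l₃ = π/2) :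
    (Real.sqrt (1 + l₁^2) * Real.sqrt (1 + l₂^2) * Real.sqrt (1 + l₃^2)) / (1 + l₁^2)
      = (l₁ + l₂ + l₃) - l₁ ∧
    (Real.sqrt (1 + l₁^2) * Real.sqrt (1 + l₂^2) * Real.sqrt (1 + l₃^2)) / (1 + l₂^2)
      = (l₁ + l₂ + l₃) - l₂ ∧
    (Real.sqrt (1 + l₁^2) * Real.sqrt (1 + l₂^2) * Real.sqrt (1 + l₃^2)) / (1 + l₃^2)
      = (l₁ + l₂ + l₃) - l₃ := by
  have ha1 := Real.arctan_lt_pi_div_two l₁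
  have ha2 := Real.arctan_lt_pi_div_two l₂
  have ha3 := Real.arctan_lt_pi_div_two l₃
  have p1 : 0 < l₂ + l₃ := sum_pos_of_arctan _ _ (by linarith)
  have p2 : 0 < l₁ + l₃ := sum_pos_of_arctan _ _ (by linarith)
  have p3 : 0 < l₁ + l₂ := sum_pos_of_arctan _ _ (by linarith)
  refine ⟨?_, ?_, ?_⟩
  · have := key l₁ l₂ l₃ (by linarith) p1
    linarith [this]
  · have := key l₂ l₁ l₃ (by linarith) p2
    have e : Real.sqrt (1 + l₂^2) * Real.sqrt (1 + l₁^2) * Real.sqrt (1 + l₃^2)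
        = Real.sqrt (1 + l₁^2) * Real.sqrt (1 + l₂^2) * Real.sqrt (1 + l₃^2) := by ring
    rw [e] at this
    linarith [this]
  · have := key l₃ l₁ l₂ (by linarith) p3
    have e : Real.sqrt (1 + l₃^2) * Real.sqrt (1 + l₁^2) * Real.sqrt (1 + l₂^2)
        = Real.sqrt (1 + l₁^2) * Real.sqrt (1 + l₂^2) * Real.sqrt (1 + l₃^2) := by ring
    rw [e] at this
    linarith [this]
end

section
/- Let λ₁, λ₂, λ₃ be real numbers with λ₁λ₂ + λ₂λ₃ + λ₃λ₁ = 1 and arctan λ₁ + arctan λ₂ + arctan λ₃ = π/2, ordered λ₁ ≥ λ₂ ≥ λ₃. Then for each i, 0 < σ₁ − λᵢ ≤ 2.42 σ₁, where σ₁ = λ₁ + λ₂ + λ₃. In particular σ₁ > 0. -/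
open Real

theorem stmt_7 (l₁ l₂ l₃ : ℝ)
    (hord₁ : l₁ ≥ l₂) (hord₂ : l₂ ≥ l₃)
    (hσ₂ : l₁ * l₂ + l₂ * l₃ + l₃ * l₁ = 1)
    (hΘ : arctan l₁ + arctan l₂ + arctan l₃ = π/2) :
    (0 < (l₁ + l₂ + l₃) - l₁ ∧ (l₁ + l₂ + l₃) - l₁ ≤ 2.42 * (l₁ + l₂ + l₃)) ∧
    (0 < (l₁ + l₂ + l₃) - l₂ ∧ (l₁ + l₂ + l₃) - l₂ ≤ 2.42 * (l₁ + l₂ + l₃)) ∧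
    (0 < (l₁ + l₂ + l₃) - l₃ ∧ (l₁ + l₂ + l₃) - l₃ ≤ 2.42 * (l₁ + l₂ + l₃)) ∧
    0 < l₁ + l₂ + l₃ := by
  have key : ∀ a b : ℝ, 0 < arctan a + arctan b → 0 < a + b := by
    intro a b h
    by_contra hc
    push_neg at hc
    have : a ≤ -b := by linarith
    have := Real.arctan_strictMono.monotone this
    rw [Real.arctan_neg] at this
    linarith
  have h23 : 0 < l₂ + l₃ := by
    apply key
    have := Real.arctan_lt_pi_div_two l₁
    linarith
  have h13 : 0 < l₁ + l₃ := by
    apply key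
    have := Real.arctan_lt_pi_div_two l₂
    linarith
  have h12 : 0 < l₁ + l₂ := by
    apply key
    have := Real.arctan_lt_pi_div_two l₃
    linarith
  have hl2 : 0 < l₂ := by linarith
  have hl1 : 0 < l₁ := by linarith
  have hσ : 0 < l₁ + l₂ + l₃ := by linarith
  have h3b : (l₁ + l₂ + l₃) - l₃ ≤ 2.42 * (l₁ + l₂ + l₃) := by
    nlinarith [sq_nonneg (l₁ - l₂), mul_pos h12 h12, sq_nonneg (l₁ + l₂)]
  refine ⟨⟨by linarith, by nlinarith⟩, ⟨by linarith, by nlinarith⟩,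
    ⟨by linarith, h3b⟩, hσ⟩
end

section
/- Let λ₁ ≥ λ₂ ≥ λ₃ be real numbers with arctan λ₁ + arctan λ₂ + arctan λ₃ = π/2. Then λ₂ + λ₃ > 0 and consequently max(λ₁, |λ₂|, |λ₃|) < λ₁ + λ₂ + λ₃. -/
open Real

theorem stmt_8 (l₁ l₂ l₃ : ℝ)
    (hord₁ : l₁ ≥ l₂) (hord₂ : l₂ ≥ l₃)
    (hΘ : arctan l₁ + arctan l₂ + arctan l₃ = π/2) :
    l₂ + l₃ > 0 ∧ max l₁ (max |l₂| |l₃|) < l₁ + l₂ + l₃ := by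
  have key : ∀ a b : ℝ, arctan a + arctan b > 0 → a + b > 0 := by
    intro a b h
    by_contra hc
    push_neg at hc
    have : a ≤ -b := by linarith
    have := Real.arctan_strictMono.monotone this
    rw [arctan_neg] at this
    linarith
  have h23 : arctan l₂ + arctan l₃ > 0 := by
    have := Real.arctan_lt_pi_div_two l₁
    linarith
  have h13 : arctan l₁ + arctan l₃ > 0 := by
    have := Real.arctan_strictMono.monotone hord₁
    linarith
  have H23 : l₂ + l₃ > 0 := key _ _ h23
  have H13 : l₁ + l₃ > 0 := key _ _ h13
  have hl2 : l₂ > 0 := by linarith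
  refine ⟨H23, ?_⟩
  have h2 : |l₂| = l₂ := abs_of_pos hl2
  have h3 : |l₃| ≤ l₂ := by
    rcases abs_cases l₃ with ⟨h, _⟩ | ⟨h, _⟩ <;> linarith
  simp only [max_lt_iff]
  refine ⟨by linarith, by linarith, by linarith⟩
end

section
/- Let λ₁ > λ₂ ≥ λ₃ be real numbers with λ₁ ≥ λ₂ > 0, λ₂ > 0, λ₃ < 0, λ₁ + 2λ₃ > 0, and σ₂ := λ₁λ₂ + λ₂λ₃ + λ₃λ₁ ≥ 1. Then for all real numbers a, b, c with a + b + c = 0, (2/3)a² + (2λ₂/(λ₁−λ₂)) b² + (2λ₃/(λ₁−λ₃)) c² ≥ 0, provided λ₁ > λ₂ and λ₁ > λ₃. -/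
theorem stmt_9 (l₁ l₂ l₃ : ℝ)
    (h12 : l₁ > l₂) (h23 : l₂ ≥ l₃) (h2 : l₂ > 0) (h3 : l₃ < 0)
    (h13 : l₁ + 2 * l₃ > 0)
    (hσ₂ : l₁ * l₂ + l₂ * l₃ + l₃ * l₁ ≥ 1) :
    ∀ a b c : ℝ, a + b + c = 0 →
      (2/3) * a^2 + (2 * l₂ / (l₁ - l₂)) * b^2 + (2 * l₃ / (l₁ - l₃)) * c^2 ≥ 0 := by
  intro a b c habc
  have hd2 : (0:ℝ) < l₁ - l₂ := by linarith
  have hd3 : (0:ℝ) < l₁ - l₃ := by linarith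
  have ha : a = -(b + c) := by linarith
  subst ha
  have key : (2/3) * (-(b + c))^2 + (2 * l₂ / (l₁ - l₂)) * b^2 + (2 * l₃ / (l₁ - l₃)) * c^2
      = ((2/3) * (b + c)^2 * ((l₁ - l₂) * (l₁ - l₃)) + 2 * l₂ * (l₁ - l₃) * b^2
        + 2 * l₃ * (l₁ - l₂) * c^2) / ((l₁ - l₂) * (l₁ - l₃)) := by
    field_simp
  rw [key, ge_iff_le]
  apply div_nonneg _ (le_of_lt (mul_pos hd2 hd3))
  have hP : (0:ℝ) < (2/3)*((l₁-l₂)*(l₁-l₃)) + 2*l₂*(l₁-l₃) := by positivity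
  nlinarith [hP, sq_nonneg (((2/3)*((l₁-l₂)*(l₁-l₃)) + 2*l₂*(l₁-l₃))*b + (2/3)*((l₁-l₂)*(l₁-l₃))*c),
    mul_nonneg (mul_nonneg (le_of_lt (mul_pos hd2 hd3)) (by linarith : (0:ℝ) ≤ l₁*l₂+l₂*l₃+l₃*l₁)) (sq_nonneg c)]
end

section
/- Let λ₁ > λ₂ ≥ λ₃, λ₂ > 0, λ₃ < 0, with σ₂ := λ₁λ₂ + λ₂λ₃ + λ₃λ₁ ≥ 1 and λ₁ + 2λ₂ > 0. Then for all real a, b, c with a + b + c = 0: (λ₁² + 2λ₁λ₂) a² + λ₂² b² + (2λ₂²λ₃/(λ₂−λ₃)) c² ≥ 0. -/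
theorem stmt_11 (l₁ l₂ l₃ : ℝ)
    (h12 : l₁ > l₂) (h23 : l₂ ≥ l₃) (h2 : l₂ > 0) (h3 : l₃ < 0)
    (hσ₂ : l₁ * l₂ + l₂ * l₃ + l₃ * l₁ ≥ 1)
    (h122 : l₁ + 2 * l₂ > 0) :
    ∀ a b c : ℝ, a + b + c = 0 →
      (l₁^2 + 2 * l₁ * l₂) * a^2 + l₂^2 * b^2 + (2 * l₂^2 * l₃ / (l₂ - l₃)) * c^2 ≥ 0 := by
  intro a b c habc
  have hd : l₂ - l₃ > 0 := by linarith
  have h1 : l₁ > 0 := by linarith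
  -- λ₂ + λ₃ ≥ 0, otherwise σ₂ < 0 < 1
  have hs : l₂ + l₃ ≥ 0 := by nlinarith [mul_pos h1 h2]
  have hc : c = -a - b := by linarith
  subst hc
  have key : (l₁^2 + 2 * l₁ * l₂) * a^2 + l₂^2 * b^2 +
      (2 * l₂^2 * l₃ / (l₂ - l₃)) * (-a - b)^2 =
      ((l₁^2 + 2 * l₁ * l₂) * a^2 * (l₂ - l₃) + l₂^2 * b^2 * (l₂ - l₃)
        + 2 * l₂^2 * l₃ * (-a - b)^2) / (l₂ - l₃) := by
    field_simp
  rw [key]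
  apply div_nonneg _ (le_of_lt hd)
  set A' := (l₁^2 + 2 * l₁ * l₂) * (l₂ - l₃) with hA
  set B' := l₂^2 * (l₂ - l₃) with hB
  set C' := 2 * l₂^2 * l₃ with hC
  have hkey : A' * B' + C' * (A' + B') =
      (l₂ - l₃) * (l₂^2 * (l₁^2 * (l₂ + l₃) + 2 * l₂ * (l₁ * l₂ + l₂ * l₃ + l₃ * l₁))) := by
    rw [hA, hB, hC]; ring
  have hk2 : l₁^2 * (l₂ + l₃) + 2 * l₂ * (l₁ * l₂ + l₂ * l₃ + l₃ * l₁) ≥ 2 * l₂ := by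
    nlinarith [mul_nonneg (sq_nonneg l₁) hs]
  have hpsd : A' * B' + C' * (A' + B') ≥ 0 := by
    rw [hkey]
    have hin : l₁^2 * (l₂ + l₃) + 2 * l₂ * (l₁ * l₂ + l₂ * l₃ + l₃ * l₁) ≥ 0 := by linarith
    exact mul_nonneg hd.le (mul_nonneg (sq_nonneg l₂) hin)
  have hApos : A' + C' > 0 := by
    have hBC : B' + C' ≥ 0 := by
      rw [hB, hC]; nlinarith [mul_nonneg (sq_nonneg l₂) hs]
    have hAB : A' > B' := by
      rw [hA, hB]
      have : l₁^2 + 2 * l₁ * l₂ > l₂^2 := by nlinarith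
      nlinarith
    linarith
  have hgoal : (l₁^2 + 2 * l₁ * l₂) * a^2 * (l₂ - l₃) + l₂^2 * b^2 * (l₂ - l₃)
      + 2 * l₂^2 * l₃ * (-a - b)^2 = A' * a^2 + B' * b^2 + C' * (a + b)^2 := by
    rw [hA, hB, hC]; ring
  rw [hgoal]
  have hid : (A' + C') * (A' * a^2 + B' * b^2 + C' * (a + b)^2) =
      ((A' + C') * a + C' * b)^2 + (A' * B' + C' * (A' + B')) * b^2 := by ring
  have h5 : 0 ≤ (A' + C') * (A' * a^2 + B' * b^2 + C' * (a + b)^2) := by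
    rw [hid]
    exact add_nonneg (sq_nonneg _) (mul_nonneg hpsd (sq_nonneg b))
  exact (mul_nonneg_iff_of_pos_left hApos).mp h5
end

section
/- Let λ₁ ≥ λ₂ ≥ λ₃ be real numbers with arctan λ₁ + arctan λ₂ + arctan λ₃ = π/2, and suppose ln√(1+λ₂²) ≥ ln√(1+λ₁²) − 2τ and ln√(1+λ₁²) ≥ 1 + ln√(1+tan²(π/6)) for some τ with 0 < τ < 1/2. Then λ₂ > tan(π/6). Moreover if additionally λ₂ = λ₃ then arctan λ₁ + arctan λ₂ + arctan λ₃ > π/2, a contradiction; hence λ₂ > λ₃. -/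
open Real

theorem stmt_16 (l₁ l₂ l₃ τ : ℝ)
    (hord₁ : l₁ ≥ l₂) (hord₂ : l₂ ≥ l₃)
    (hΘ : arctan l₁ + arctan l₂ + arctan l₃ = π/2)
    (hτ₀ : 0 < τ) (hτ : τ < 1/2)
    (h2 : Real.log (Real.sqrt (1 + l₂^2)) ≥ Real.log (Real.sqrt (1 + l₁^2)) - 2 * τ)
    (h1 : Real.log (Real.sqrt (1 + l₁^2)) ≥ 1 + Real.log (Real.sqrt (1 + Real.tan (π/6)^2))) :
    l₂ > Real.tan (π/6) ∧ l₂ > l₃ := by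
  have pi_pos := Real.pi_pos
  have t0 : (0:ℝ) < Real.tan (π/6) :=
    Real.tan_pos_of_pos_of_lt_pi_div_two (by positivity) (by linarith)
  have ha1 : arctan l₁ < π/2 := Real.arctan_lt_pi_div_two l₁
  have hm32 : arctan l₃ ≤ arctan l₂ := Real.arctan_strictMono.monotone hord₂
  have hm21 : arctan l₂ ≤ arctan l₁ := Real.arctan_strictMono.monotone hord₁
  have hl2pos : 0 < l₂ := by
    by_contra hc
    have : arctan l₂ ≤ 0 := by simpa using Real.arctan_strictMono.monotone (not_lt.mp hc)
    linarith
  have e1 : Real.log (Real.sqrt (1 + l₁^2)) = Real.log (1 + l₁^2) / 2 :=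
    Real.log_sqrt (by positivity)
  have e2 : Real.log (Real.sqrt (1 + l₂^2)) = Real.log (1 + l₂^2) / 2 :=
    Real.log_sqrt (by positivity)
  have e3 : Real.log (Real.sqrt (1 + Real.tan (π/6)^2)) = Real.log (1 + Real.tan (π/6)^2) / 2 :=
    Real.log_sqrt (by positivity)
  have hlog : Real.log (1 + Real.tan (π/6)^2) < Real.log (1 + l₂^2) := by
    rw [e1] at h1 h2; rw [e2] at h2; rw [e3] at h1
    linarith
  have hsq : Real.tan (π/6)^2 < l₂^2 := by
    have := (Real.log_lt_log_iff (by positivity : (0:ℝ) < 1 + Real.tan (π/6)^2)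
      (by positivity : (0:ℝ) < 1 + l₂^2)).mp hlog
    linarith
  have hmain : l₂ > Real.tan (π/6) := by nlinarith
  refine ⟨hmain, ?_⟩
  by_contra h
  have heq : l₂ = l₃ := le_antisymm (not_lt.mp h) hord₂
  have h6 : π/6 < arctan l₂ := by
    have := Real.arctan_strictMono hmain  -- arctan (tan (π/6)) < arctan l₂ ?
    rwa [Real.arctan_tan (by linarith) (by linarith)] at this
  have h6' : π/6 < arctan l₁ := lt_of_lt_of_le h6 hm21
  rw [← heq] at hΘ
  linarith
end
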